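/- For each t ∈ εℤ with t > 0, Σ_{x∈εℤ} P(x,t,m,ε) = 1. -/

import Mathlib

open scoped BigOperators

/-- The final x-coordinate of a checker path from `(0,0)` encoded by its sequence of moves
(`true` = move `(1,1)`, `false` = move `(-1,1)`). -/
def moveEndpoint {n : ℕ} (d : Fin n → Bool) : ℤ :=
  ∑ k, (if d k then (1 : ℤ) else -1)

/-- The number of turns of a checker path encoded by its sequence of moves. -/
def nturns {n : ℕ} (d : Fin n → Bool) : ℕ :=
  ((List.ofFn d).zip (List.ofFn d).tail).countP fun p => p.1 != p.2

/-- Checker paths from `(0,0)` to `(x,t)` whose first step is to `(1,1)`,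
encoded by their sequences of moves. -/
def cpaths (x t : ℤ) : Finset (Fin t.toNat → Bool) :=
  Finset.univ.filter fun d => moveEndpoint d = x ∧ (List.ofFn d).headI = true

/-- Feynman checkers amplitude with mass: `a(x·ε, t·ε, m, ε)` written in lattice
coordinates, i.e. `am m ε x t = (1+m²ε²)^((1-t)/2) * i * ∑ₛ (-i·m·ε)^turns(s)`. -/
noncomputable def am (m ε : ℝ) (x t : ℤ) : ℂ :=
  (Real.sqrt (1 + m ^ 2 * ε ^ 2) : ℂ) ^ (1 - t) * Complex.I *
    ∑ d ∈ cpaths x t, (-Complex.I * (m * ε)) ^ nturns d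

/-! ### Auxiliary lemmas -/

section Aux

open Finset

set_option maxHeartbeats 1000000

/-- Turns of a list of moves. -/
def lturns (l : List Bool) : ℕ := (l.zip l.tail).countP fun p => p.1 != p.2

lemma nturns_eq {n : ℕ} (d : Fin n → Bool) : nturns d = lturns (List.ofFn d) := rfl

lemma lturns_cons_cons (x y : Bool) (l : List Bool) :
    lturns (x :: y :: l) = (if x != y then 1 else 0) + lturns (y :: l) := by
  simp [lturns, List.countP_cons, Nat.add_comm]

lemma lturns_append_pair (a b : Bool) : ∀ l : List Bool,
    lturns (l ++ [a, b]) = lturns (l ++ [a]) + (if a != b then 1 else 0)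
  | [] => by simp [lturns, List.countP_cons]
  | [x] => by
      simp only [List.cons_append, List.nil_append, lturns_cons_cons]
      simp [lturns, List.countP_cons]
  | x :: y :: l => by
      have := lturns_append_pair a b (y :: l)
      simp only [List.cons_append] at *
      rw [lturns_cons_cons, lturns_cons_cons, this]
      ring

lemma ofFn_snoc {n : ℕ} (e : Fin n → Bool) (b : Bool) :
    List.ofFn (Fin.snoc e b) = List.ofFn e ++ [b] := by
  rw [List.ofFn_succ']
  simp [List.concat_eq_append]

lemma nturns_snoc {n : ℕ} (e : Fin (n+1) → Bool) (b : Bool) :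
    nturns (Fin.snoc e b) = nturns e + (if e (Fin.last n) != b then 1 else 0) := by
  rw [nturns_eq, nturns_eq, ofFn_snoc]
  conv_lhs => rw [List.ofFn_succ' e]
  conv_rhs => rw [List.ofFn_succ' e]
  simp only [List.concat_eq_append, List.append_assoc, List.cons_append, List.nil_append]
  exact lturns_append_pair _ _ _

lemma moveEndpoint_snoc {n : ℕ} (e : Fin n → Bool) (b : Bool) :
    moveEndpoint (Fin.snoc e b) = moveEndpoint e + (if b then 1 else -1) := by
  unfold moveEndpoint
  rw [Fin.sum_univ_castSucc]
  simp

/-- Path sums refined by the last move. -/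
noncomputable def Fm (w : ℝ) (n : ℕ) (x : ℤ) (c : Bool) : ℂ :=
  ∑ d ∈ Finset.univ.filter (fun d : Fin (n+1) → Bool =>
      moveEndpoint d = x ∧ d 0 = true ∧ d (Fin.last n) = c),
    (-Complex.I * w) ^ nturns d

lemma nturns_one (d : Fin 1 → Bool) : nturns d = 0 := rfl

lemma Fm_zero (w : ℝ) (x : ℤ) (c : Bool) :
    Fm w 0 x c = if x = 1 ∧ c = true then 1 else 0 := by
  unfold Fm
  by_cases h : x = 1 ∧ c = true
  · obtain ⟨hx, hc⟩ := h
    subst hx hc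
    have : Finset.univ.filter (fun d : Fin 1 → Bool =>
        moveEndpoint d = 1 ∧ d 0 = true ∧ d (Fin.last 0) = true) = {fun _ => true} := by
      ext d
      simp only [mem_filter, mem_univ, true_and, Finset.mem_singleton]
      constructor
      · rintro ⟨-, h2, -⟩
        funext i
        have : i = 0 := Subsingleton.elim _ _
        rw [this, h2]
      · rintro rfl
        refine ⟨?_, rfl, rfl⟩
        simp [moveEndpoint, Fin.sum_univ_one]
    rw [this]
    simp [nturns_one]
  · rw [if_neg h, Finset.filter_false_of_mem, Finset.sum_empty]
    intro d _
    rintro ⟨h1, h2, h3⟩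
    have hl : Fin.last 0 = (0 : Fin 1) := rfl
    rw [hl, h2] at h3
    have : moveEndpoint d = 1 := by
      simp [moveEndpoint, Fin.sum_univ_one, h2]
    exact h ⟨h1 ▸ this.symm ▸ rfl, h3.symm⟩

lemma Fm_succ (w : ℝ) (n : ℕ) (x : ℤ) (c : Bool) :
    Fm w (n+1) x c = Fm w n (x - (if c then 1 else -1)) c
      + (-Complex.I * w) * Fm w n (x - (if c then 1 else -1)) (!c) := by
  classical
  set z : ℂ := -Complex.I * w with hz
  set y : ℤ := x - (if c then 1 else -1) with hy
  have key : Fm w (n+1) x c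
      = ∑ e ∈ Finset.univ.filter (fun e : Fin (n+1) → Bool =>
          moveEndpoint e = y ∧ e 0 = true),
        z ^ nturns e * (if e (Fin.last n) != c then z else 1) := by
    unfold Fm
    refine Finset.sum_nbij' (fun d => Fin.init d) (fun e => Fin.snoc e c) ?_ ?_ ?_ ?_ ?_
    · intro d hd
      simp only [mem_filter, mem_univ, true_and] at hd ⊢
      obtain ⟨h1, h2, h3⟩ := hd
      have hds : Fin.snoc (Fin.init d) c = d := by
        rw [← h3]; exact Fin.snoc_init_self d
      constructor
      · have := moveEndpoint_snoc (Fin.init d) c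
        rw [hds, h1] at this
        omega
      · have : Fin.init d 0 = d 0 := by
          simp [Fin.init]
        rw [this, h2]
    · intro e he
      simp only [mem_filter, mem_univ, true_and] at he ⊢
      obtain ⟨h1, h2⟩ := he
      refine ⟨?_, ?_, ?_⟩
      · rw [moveEndpoint_snoc, h1, hy]; ring
      · have : (Fin.snoc e c : Fin (n+2) → Bool) 0 = e 0 := by
          have h0 : (0 : Fin (n+2)) = Fin.castSucc 0 := rfl
          rw [h0, Fin.snoc_castSucc]
        rw [this, h2]
      · exact Fin.snoc_last _ _
    · intro d hd
      simp only [mem_filter, mem_univ, true_and] at hd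
      rw [← hd.2.2]; exact Fin.snoc_init_self d
    · intro e _; exact Fin.init_snoc _ _
    · intro d hd
      simp only [mem_filter, mem_univ, true_and] at hd
      have hds : Fin.snoc (Fin.init d) c = d := by
        rw [← hd.2.2]; exact Fin.snoc_init_self d
      conv_lhs => rw [← hds]
      rw [nturns_snoc, pow_add]
      by_cases hb : Fin.init d (Fin.last n) != c <;> simp [hb, hz] <;> ring
  rw [key]
  rw [← Finset.sum_filter_add_sum_filter_not _ (fun e => e (Fin.last n) = c)]
  congr 1
  · rw [Finset.filter_filter]
    unfold Fm
    apply Finset.sum_congr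
    · apply Finset.filter_congr
      intro d _
      constructor
      · rintro ⟨⟨h1, h2⟩, h3⟩; exact ⟨h1, h2, h3⟩
      · rintro ⟨h1, h2, h3⟩; exact ⟨⟨h1, h2⟩, h3⟩
    · intro d hd
      simp only [mem_filter, mem_univ, true_and] at hd
      rw [hd.2.2]
      simp [hz]
  · rw [Finset.filter_filter]
    unfold Fm
    rw [Finset.mul_sum]
    refine Finset.sum_congr ?_ ?_
    · apply Finset.filter_congr
      intro d _
      constructor
      · rintro ⟨⟨h1, h2⟩, h3⟩
        refine ⟨h1, h2, ?_⟩
        cases hc : d (Fin.last n) <;> cases c <;> simp_all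
      · rintro ⟨h1, h2, h3⟩
        refine ⟨⟨h1, h2⟩, ?_⟩
        rw [h3]; cases c <;> simp
    · intro d hd
      simp only [mem_filter, mem_univ, true_and] at hd
      rw [hd.2.2, hz]
      cases c <;> simp <;> ring

lemma abs_moveEndpoint_le {n : ℕ} (d : Fin n → Bool) : |moveEndpoint d| ≤ n := by
  unfold moveEndpoint
  calc |∑ k, (if d k then (1:ℤ) else -1)| ≤ ∑ k : Fin n, |if d k then (1:ℤ) else -1| :=
        Finset.abs_sum_le_sum_abs _ _
    _ ≤ ∑ _k : Fin n, 1 := by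
        apply Finset.sum_le_sum
        intro i _
        by_cases h : d i <;> simp [h]
    _ = n := by simp

lemma Fm_support {w : ℝ} {n : ℕ} {x : ℤ} {c : Bool}
    (h : x ∉ Finset.Icc (-(n:ℤ)-1) ((n:ℤ)+1)) : Fm w n x c = 0 := by
  unfold Fm
  rw [Finset.filter_false_of_mem, Finset.sum_empty]
  rintro d - ⟨h1, -, -⟩
  apply h
  rw [Finset.mem_Icc]
  have := abs_moveEndpoint_le d
  rw [abs_le] at this
  rw [h1] at this
  push_cast at this
  omega

lemma headI_ofFn {k : ℕ} (d : Fin (k+1) → Bool) : (List.ofFn d).headI = d 0 := by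
  rw [List.ofFn_succ]; rfl

lemma bridge (w : ℝ) (k : ℕ) (x t : ℤ) (ht : t = (k:ℤ)+1) :
    ∑ d ∈ cpaths x t, (-Complex.I * w) ^ nturns d = Fm w k x true + Fm w k x false := by
  subst ht
  have h : ((k:ℤ)+1).toNat = k + 1 := by omega
  unfold cpaths
  rw [h]
  calc ∑ d ∈ Finset.univ.filter (fun d : Fin (k+1) → Bool =>
        moveEndpoint d = x ∧ (List.ofFn d).headI = true), (-Complex.I * w) ^ nturns d
      = ∑ d ∈ Finset.univ.filter (fun d : Fin (k+1) → Bool =>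
        moveEndpoint d = x ∧ d 0 = true), (-Complex.I * w) ^ nturns d := by
        apply Finset.sum_congr _ (fun _ _ => rfl)
        apply Finset.filter_congr
        intro d _
        rw [headI_ofFn]
    _ = Fm w k x true + Fm w k x false := by
        rw [← Finset.sum_filter_add_sum_filter_not _ (fun d => d (Fin.last k) = true)]
        unfold Fm
        congr 1
        · rw [Finset.filter_filter]
          apply Finset.sum_congr _ (fun _ _ => rfl)
          apply Finset.filter_congr
          intro d _
          tauto
        · rw [Finset.filter_filter]
          apply Finset.sum_congr _ (fun _ _ => rfl)
          apply Finset.filter_congr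
          intro d _
          simp only [Bool.not_eq_true]
          tauto

attribute [irreducible] Fm

lemma Fm_re_im (w : ℝ) : ∀ n x, (Fm w n x true).im = 0 ∧ (Fm w n x false).re = 0 := by
  intro n
  induction n with
  | zero =>
      intro x
      rw [Fm_zero, Fm_zero]
      constructor
      · split <;> simp
      · split <;> simp_all
  | succ n ih =>
      intro x
      constructor
      · rw [Fm_succ]
        simp only [if_pos rfl, Bool.not_true, Complex.add_im, Complex.mul_im]
        have h1 := (ih (x-1)).1
        have h2 := (ih (x-1)).2
        simp [h1, h2, Complex.mul_im, Complex.mul_re]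
      · rw [Fm_succ]
        simp only [Bool.not_false]
        have h1 := (ih (x+1)).1
        have h2 := (ih (x+1)).2
        simp [h1, h2, Complex.add_re, Complex.mul_re]

/-- The probability at a lattice site, refined by last move. -/
noncomputable def Fsq (w : ℝ) (n : ℕ) (x : ℤ) : ℝ :=
  ‖Fm w n x true‖ ^ 2 + ‖Fm w n x false‖ ^ 2

lemma cross_identity (w : ℝ) (u v : ℂ) :
    ‖u + -Complex.I * w * v‖ ^ 2 + ‖v + -Complex.I * w * u‖ ^ 2
      = (1 + w ^ 2) * (‖u‖ ^ 2 + ‖v‖ ^ 2) := by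
  simp only [Complex.sq_norm, Complex.normSq_apply, Complex.add_re, Complex.add_im,
    Complex.mul_re, Complex.mul_im, Complex.neg_re, Complex.neg_im, Complex.I_re,
    Complex.I_im, Complex.ofReal_re, Complex.ofReal_im]
  ring

lemma summable_aux (f : ℤ → ℝ) (s : Finset ℤ) (h : ∀ x ∉ s, f x = 0) : Summable f :=
  summable_of_ne_finset_zero h

noncomputable def Gg (w : ℝ) (n : ℕ) (c : Bool) (y : ℤ) : ℝ :=
  ‖Fm w n y c + -Complex.I * w * Fm w n y (!c)‖ ^ 2

lemma Fsq_tsum (w : ℝ) (n : ℕ) : ∑' x : ℤ, Fsq w n x = (1 + w ^ 2) ^ n := by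
  induction n with
  | zero =>
      rw [pow_zero]
      rw [tsum_eq_single (1 : ℤ)]
      · simp [Fsq, Fm_zero]
      · intro x hx
        simp [Fsq, Fm_zero, hx]
  | succ n ih =>
      have hg1 : ∀ y, Gg w n true y
          = ‖Fm w n y true + -Complex.I * w * Fm w n y false‖ ^ 2 := fun y => rfl
      have hg2 : ∀ y, Gg w n false y
          = ‖Fm w n y false + -Complex.I * w * Fm w n y true‖ ^ 2 := fun y => rfl
      have hsum1 : Summable (Gg w n true) := by
        apply summable_aux _ (Finset.Icc (-(n:ℤ)-1) ((n:ℤ)+1))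
        intro x hx
        rw [hg1]
        rw [Fm_support (c := true) hx, Fm_support (c := false) hx]
        simp
      have hsum2 : Summable (Gg w n false) := by
        apply summable_aux _ (Finset.Icc (-(n:ℤ)-1) ((n:ℤ)+1))
        intro x hx
        rw [hg2]
        rw [Fm_support (c := true) hx, Fm_support (c := false) hx]
        simp
      have key : ∀ x : ℤ, Fsq w (n+1) x = Gg w n true (x - 1) + Gg w n false (x + 1) := by
        intro x
        unfold Fsq
        rw [Fm_succ w n x true, Fm_succ w n x false]
        rw [hg1, hg2]
        simp
      have h1 : Summable (fun x : ℤ => Gg w n true (x - 1)) := by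
        apply summable_aux _ (Finset.Icc (-(n:ℤ)) ((n:ℤ)+2))
        intro x hx
        have hx' : x - 1 ∉ Finset.Icc (-(n:ℤ)-1) ((n:ℤ)+1) := by
          simp only [Finset.mem_Icc] at hx ⊢
          omega
        rw [hg1]
        rw [Fm_support (c := true) hx', Fm_support (c := false) hx']
        simp
      have h2 : Summable (fun x : ℤ => Gg w n false (x + 1)) := by
        apply summable_aux _ (Finset.Icc (-(n:ℤ)-2) ((n:ℤ)))
        intro x hx
        have hx' : x + 1 ∉ Finset.Icc (-(n:ℤ)-1) ((n:ℤ)+1) := by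
          simp only [Finset.mem_Icc] at hx ⊢
          omega
        rw [hg2]
        rw [Fm_support (c := true) hx', Fm_support (c := false) hx']
        simp
      have e1 : ∑' x : ℤ, Gg w n true (x - 1) = ∑' y, Gg w n true y :=
        (Equiv.subRight (1:ℤ)).tsum_eq (Gg w n true)
      have e2 : ∑' x : ℤ, Gg w n false (x + 1) = ∑' y, Gg w n false y :=
        (Equiv.addRight (1:ℤ)).tsum_eq (Gg w n false)
      have hpt : ∀ y : ℤ, Gg w n true y + Gg w n false y = (1 + w ^ 2) * Fsq w n y := by
        intro y
        rw [hg1, hg2, cross_identity]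
        rfl
      calc ∑' x : ℤ, Fsq w (n+1) x
          = ∑' x : ℤ, (Gg w n true (x - 1) + Gg w n false (x + 1)) := tsum_congr key
        _ = (∑' x : ℤ, Gg w n true (x - 1)) + ∑' x : ℤ, Gg w n false (x + 1) := Summable.tsum_add h1 h2
        _ = (∑' y, Gg w n true y) + ∑' y, Gg w n false y := by rw [e1, e2]
        _ = ∑' y : ℤ, (Gg w n true y + Gg w n false y) := (Summable.tsum_add hsum1 hsum2).symm
        _ = ∑' y : ℤ, (1 + w ^ 2) * Fsq w n y := tsum_congr hpt
        _ = (1 + w ^ 2) * ∑' y, Fsq w n y := tsum_mul_left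
        _ = (1 + w ^ 2) ^ (n+1) := by rw [ih]; ring

lemma ortho (u v : ℂ) (hu : u.im = 0) (hv : v.re = 0) :
    ‖u + v‖ ^ 2 = ‖u‖ ^ 2 + ‖v‖ ^ 2 := by
  simp only [Complex.sq_norm, Complex.normSq_apply, Complex.add_re, Complex.add_im, hu, hv]
  ring

end Aux

/-- Probability conservation for the model with mass. -/
theorem probability_conservation_mass (m ε : ℝ) (hε : 0 < ε) (hm : 0 ≤ m)
    (t : ℤ) (ht : 0 < t) :
    ∑' x : ℤ, ‖am m ε x t‖ ^ 2 = 1 := by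
  obtain ⟨k, rfl⟩ : ∃ k : ℕ, t = (k:ℤ)+1 := ⟨(t-1).toNat, by omega⟩
  set w : ℝ := m * ε with hw
  have hApos : (0:ℝ) < 1 + w ^ 2 := by positivity
  have hsq : (Real.sqrt (1 + w ^ 2) ^ (-(k:ℤ))) ^ 2 = ((1 + w ^ 2) ^ k)⁻¹ := by
    rw [zpow_neg, inv_pow, zpow_natCast, ← pow_mul, mul_comm k 2, pow_mul,
      Real.sq_sqrt hApos.le]
  have hpt : ∀ x : ℤ, ‖am m ε x ((k:ℤ)+1)‖ ^ 2
      = ((1 + w ^ 2) ^ k)⁻¹ * Fsq w k x := by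
    intro x
    have hz : (-Complex.I * ((m:ℂ) * (ε:ℂ))) = -Complex.I * ((w:ℝ):ℂ) := by
      rw [hw]; push_cast; ring
    have hA : (1:ℝ) + m ^ 2 * ε ^ 2 = 1 + w ^ 2 := by rw [hw]; ring
    have he : (1 : ℤ) - ((k:ℤ)+1) = -(k:ℤ) := by ring
    unfold am
    rw [hz, hA, he, bridge w k x ((k:ℤ)+1) rfl]
    rw [norm_mul, norm_mul, Complex.norm_I, mul_one, norm_zpow, Complex.norm_real, Real.norm_eq_abs,
      abs_of_nonneg (Real.sqrt_nonneg _), mul_pow, hsq,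
      ortho _ _ (Fm_re_im w k x).1 (Fm_re_im w k x).2]
    rfl
  rw [tsum_congr hpt, tsum_mul_left, Fsq_tsum, inv_mul_cancel₀ (by positivity)]
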